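/- Let 2 ≤ r_1 ≤ r_2 ≤ r_3. Then the polytope C(r_1,r_2,r_3) equals the convex hull in ℝ^3 of the following eight points: (1,1,1), (1,1,r_3+1), (1,−r_1+1,−r_1+r_3+1), (−r_2+1,1,−r_2+r_3+1), (−r_2+1,−r_1+1,−r_1−r_2+1), (−r_2+1,−r_1+1,−r_1−r_2+r_3+1), (1,−r_1+1,−r_1+1), and (−r_2+1,1,−r_2+1); these are exactly the vertices of C(r_1,r_2,r_3). -/

import Mathlib

open Set

/-- Extreme points of a nondegenerate closed interval in `ℝ` are its endpoints. -/
lemma extremePoints_Icc_real {a b : ℝ} (h : a < b) :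
    Set.extremePoints ℝ (Set.Icc a b) = {a, b} := by
  ext x
  constructor
  · rintro ⟨hx, hext⟩
    by_contra hne
    simp only [Set.mem_insert_iff, Set.mem_singleton_iff] at hne
    push_neg at hne
    have hax : a < x := lt_of_le_of_ne hx.1 (Ne.symm hne.1)
    have hxb : x < b := lt_of_le_of_ne hx.2 hne.2
    have := hext ⟨le_refl a, h.le⟩ ⟨h.le, le_refl b⟩
      (by rw [openSegment_eq_Ioo h]; exact ⟨hax, hxb⟩)
    exact hne.1 this.symm
  · have key : ∀ x : ℝ, x ∈ Set.Icc a b →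
        (∀ y ∈ Set.Icc a b, x ≤ y) → x ∈ Set.extremePoints ℝ (Set.Icc a b) := by
      intro x hx hmin
      refine ⟨hx, ?_⟩
      rintro x1 hx1 x2 hx2 ⟨c, d, hc, hd, hcd, heq⟩
      rw [smul_eq_mul, smul_eq_mul] at heq
      have e1 : x ≤ x1 := hmin _ hx1
      have e2 : x ≤ x2 := hmin _ hx2
      have hx' : c * x + d * x = x := by rw [← add_mul, hcd, one_mul]
      refine And.left (b := x2 = x) ⟨?_, ?_⟩
      · by_contra hne
        have : x < x1 := lt_of_le_of_ne e1 (Ne.symm hne)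
        linarith [mul_pos hc (sub_pos.2 this), mul_le_mul_of_nonneg_left e2 hd.le]
      · by_contra hne
        have : x < x2 := lt_of_le_of_ne e2 (Ne.symm hne)
        linarith [mul_pos hd (sub_pos.2 this), mul_le_mul_of_nonneg_left e1 hc.le]
    have keymax : ∀ x : ℝ, x ∈ Set.Icc a b →
        (∀ y ∈ Set.Icc a b, y ≤ x) → x ∈ Set.extremePoints ℝ (Set.Icc a b) := by
      intro x hx hmax
      refine ⟨hx, ?_⟩
      rintro x1 hx1 x2 hx2 ⟨c, d, hc, hd, hcd, heq⟩
      rw [smul_eq_mul, smul_eq_mul] at heq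
      have e1 : x1 ≤ x := hmax _ hx1
      have e2 : x2 ≤ x := hmax _ hx2
      have hx' : c * x + d * x = x := by rw [← add_mul, hcd, one_mul]
      refine And.left (b := x2 = x) ⟨?_, ?_⟩
      · by_contra hne
        have : x1 < x := lt_of_le_of_ne e1 hne
        linarith [mul_pos hc (sub_pos.2 this), mul_le_mul_of_nonneg_left e2 hd.le]
      · by_contra hne
        have : x2 < x := lt_of_le_of_ne e2 hne
        linarith [mul_pos hd (sub_pos.2 this), mul_le_mul_of_nonneg_left e1 hc.le]
    rintro (rfl | rfl)
    · exact key x ⟨le_refl x, h.le⟩ (fun y hy => hy.1)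
    · exact keymax x ⟨h.le, le_refl x⟩ (fun y hy => hy.2)

/-- The polytope `C(r_1,r_2,r_3) ⊆ ℝ^3` (coordinates `z 0, z 1, z 2`). -/
def C3set (r1 r2 r3 : ℕ) : Set (Fin 3 → ℝ) :=
  {z | -(r2 : ℝ) ≤ z 0 - z 1 ∧ z 0 - z 1 ≤ (r1 : ℝ) ∧
       -(r3 : ℝ) ≤ z 0 - z 2 ∧ z 0 - z 2 ≤ (r1 : ℝ) ∧
       -(r3 : ℝ) ≤ z 1 - z 2 ∧ z 1 - z 2 ≤ (r2 : ℝ) ∧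
       -(r2 : ℝ) + 1 ≤ z 0 ∧ z 0 ≤ 1 ∧
       -(r1 : ℝ) + 1 ≤ z 1 ∧ z 1 ≤ 1 ∧
       -(r3 : ℝ) + 1 ≤ z 0 + z 1 - z 2 ∧ z 0 + z 1 - z 2 ≤ 1}

/-- The eight claimed vertices of `C(r_1,r_2,r_3)`. -/
def C3verts (r1 r2 r3 : ℕ) : Set (Fin 3 → ℝ) :=
  { ![1, 1, 1],
    ![1, 1, (r3 : ℝ) + 1],
    ![1, -(r1 : ℝ) + 1, -(r1 : ℝ) + (r3 : ℝ) + 1],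
    ![-(r2 : ℝ) + 1, 1, -(r2 : ℝ) + (r3 : ℝ) + 1],
    ![-(r2 : ℝ) + 1, -(r1 : ℝ) + 1, -(r1 : ℝ) - (r2 : ℝ) + 1],
    ![-(r2 : ℝ) + 1, -(r1 : ℝ) + 1, -(r1 : ℝ) - (r2 : ℝ) + (r3 : ℝ) + 1],
    ![1, -(r1 : ℝ) + 1, -(r1 : ℝ) + 1],
    ![-(r2 : ℝ) + 1, 1, -(r2 : ℝ) + 1] }

/-- The linear change of coordinates `(w₀,w₁,w₂) ↦ (w₀, w₁, w₀+w₁+w₂)`. -/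
noncomputable def e3 : (Fin 3 → ℝ) ≃ₗ[ℝ] (Fin 3 → ℝ) where
  toFun w := ![w 0, w 1, w 0 + w 1 + w 2]
  invFun z := ![z 0, z 1, z 2 - z 0 - z 1]
  map_add' x y := by
    funext i
    fin_cases i <;> simp <;> ring
  map_smul' c x := by
    funext i
    fin_cases i <;> simp <;> ring
  left_inv w := by
    funext i
    fin_cases i <;> simp <;> ring
  right_inv z := by
    funext i
    fin_cases i <;> simp <;> ring

lemma e3_apply (w : Fin 3 → ℝ) : e3 w = ![w 0, w 1, w 0 + w 1 + w 2] := rfl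

/-- For `2 ≤ r_1 ≤ r_2 ≤ r_3`, the polytope `C(r_1,r_2,r_3)` is the convex hull of the
eight listed points, and these are exactly its vertices (extreme points). -/
theorem stmt_15 (r1 r2 r3 : ℕ) (h1 : 2 ≤ r1) (h12 : r1 ≤ r2) (h23 : r2 ≤ r3) :
    C3set r1 r2 r3 = convexHull ℝ (C3verts r1 r2 r3) ∧
    Set.extremePoints ℝ (C3set r1 r2 r3) = C3verts r1 r2 r3 := by
  have hr1 : (2 : ℝ) ≤ (r1 : ℝ) := by exact_mod_cast h1
  have hr12 : (r1 : ℝ) ≤ (r2 : ℝ) := by exact_mod_cast h12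
  have hr23 : (r2 : ℝ) ≤ (r3 : ℝ) := by exact_mod_cast h23
  set av : Fin 3 → ℝ := ![1 - (r2 : ℝ), 1 - (r1 : ℝ), -1] with hav
  set bv : Fin 3 → ℝ := ![1, 1, (r3 : ℝ) - 1] with hbv
  have hab : ∀ i, av i < bv i := by
    intro i
    fin_cases i <;> simp [hav, hbv] <;> linarith
  set B : Set (Fin 3 → ℝ) := Set.pi Set.univ (fun i => Set.Icc (av i) (bv i)) with hB
  set K : Set (Fin 3 → ℝ) := Set.pi Set.univ (fun i => ({av i, bv i} : Set ℝ)) with hK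
  -- The polytope is the image of the box under `e3`.
  have hCB : C3set r1 r2 r3 = ⇑e3 '' B := by
    ext z
    constructor
    · intro hz
      obtain ⟨c1, c2, c3, c4, c5, c6, c7, c8, c9, c10, c11, c12⟩ := hz
      refine ⟨![z 0, z 1, z 2 - z 0 - z 1], ?_, ?_⟩
      · intro i _
        fin_cases i <;>
          · simp only [hav, hbv]
            simp only [Set.mem_Icc, Matrix.cons_val_zero, Matrix.cons_val_one, Matrix.head_cons,
              Matrix.cons_val_two, Matrix.tail_cons, Matrix.cons_val_fin_one, Fin.isValue]
            norm_num
            constructor <;> linarith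
      · funext i
        fin_cases i <;> simp [e3_apply] <;> ring
    · rintro ⟨w, hw, rfl⟩
      have h0 := hw 0 (Set.mem_univ _)
      have h1' := hw 1 (Set.mem_univ _)
      have h2 := hw 2 (Set.mem_univ _)
      simp only [hav, hbv, Matrix.cons_val_zero, Matrix.cons_val_one, Matrix.head_cons,
        Matrix.cons_val_two, Matrix.tail_cons, Set.mem_Icc] at h0 h1' h2
      simp only [C3set, e3_apply, Set.mem_setOf_eq, Matrix.cons_val_zero, Matrix.cons_val_one,
        Matrix.head_cons, Matrix.cons_val_two, Matrix.tail_cons]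
      refine ⟨?_, ?_, ?_, ?_, ?_, ?_, ?_, ?_, ?_, ?_, ?_, ?_⟩ <;> linarith
  -- The vertex set is the image of the corners under `e3`.
  have hVK : C3verts r1 r2 r3 = ⇑e3 '' K := by
    ext z
    constructor
    · intro hz
      simp only [C3verts, Set.mem_insert_iff, Set.mem_singleton_iff] at hz
      rcases hz with rfl | rfl | rfl | rfl | rfl | rfl | rfl | rfl
      · exact ⟨![1, 1, -1], fun i _ => by fin_cases i <;> simp [hav, hbv],
          by funext i; fin_cases i <;> simp [e3_apply] <;> ring⟩
      · exact ⟨![1, 1, (r3 : ℝ) - 1], fun i _ => by fin_cases i <;> simp [hav, hbv],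
          by funext i; fin_cases i <;> simp [e3_apply] <;> ring⟩
      · exact ⟨![1, 1 - (r1 : ℝ), (r3 : ℝ) - 1], fun i _ => by fin_cases i <;> simp [hav, hbv],
          by funext i; fin_cases i <;> simp [e3_apply] <;> ring⟩
      · exact ⟨![1 - (r2 : ℝ), 1, (r3 : ℝ) - 1], fun i _ => by fin_cases i <;> simp [hav, hbv],
          by funext i; fin_cases i <;> simp [e3_apply] <;> ring⟩
      · exact ⟨![1 - (r2 : ℝ), 1 - (r1 : ℝ), -1], fun i _ => by fin_cases i <;> simp [hav, hbv],
          by funext i; fin_cases i <;> simp [e3_apply] <;> ring⟩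
      · exact ⟨![1 - (r2 : ℝ), 1 - (r1 : ℝ), (r3 : ℝ) - 1],
          fun i _ => by fin_cases i <;> simp [hav, hbv],
          by funext i; fin_cases i <;> simp [e3_apply] <;> ring⟩
      · exact ⟨![1, 1 - (r1 : ℝ), -1], fun i _ => by fin_cases i <;> simp [hav, hbv],
          by funext i; fin_cases i <;> simp [e3_apply] <;> ring⟩
      · exact ⟨![1 - (r2 : ℝ), 1, -1], fun i _ => by fin_cases i <;> simp [hav, hbv],
          by funext i; fin_cases i <;> simp [e3_apply] <;> ring⟩
    · rintro ⟨w, hw, rfl⟩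
      have h0 := hw 0 (Set.mem_univ _)
      have h1' := hw 1 (Set.mem_univ _)
      have h2 := hw 2 (Set.mem_univ _)
      simp only [hav, hbv, Matrix.cons_val_zero, Matrix.cons_val_one, Matrix.head_cons,
        Matrix.cons_val_two, Matrix.tail_cons, Set.mem_insert_iff,
        Set.mem_singleton_iff] at h0 h1' h2
      simp only [C3verts, Set.mem_insert_iff, Set.mem_singleton_iff]
      rcases h0 with h0 | h0 <;> rcases h1' with h1' | h1' <;> rcases h2 with h2 | h2
      · exact Or.inr (Or.inr (Or.inr (Or.inr (Or.inl
          (by funext i; fin_cases i <;> simp [e3_apply, h0, h1', h2] <;> ring)))))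
      · exact Or.inr (Or.inr (Or.inr (Or.inr (Or.inr (Or.inl
          (by funext i; fin_cases i <;> simp [e3_apply, h0, h1', h2] <;> ring))))))
      · exact Or.inr (Or.inr (Or.inr (Or.inr (Or.inr (Or.inr (Or.inr
          (by funext i; fin_cases i <;> simp [e3_apply, h0, h1', h2] <;> ring)))))))
      · exact Or.inr (Or.inr (Or.inr (Or.inl
          (by funext i; fin_cases i <;> simp [e3_apply, h0, h1', h2] <;> ring))))
      · exact Or.inr (Or.inr (Or.inr (Or.inr (Or.inr (Or.inr (Or.inl
          (by funext i; fin_cases i <;> simp [e3_apply, h0, h1', h2] <;> ring)))))))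
      · exact Or.inr (Or.inr (Or.inl
          (by funext i; fin_cases i <;> simp [e3_apply, h0, h1', h2] <;> ring)))
      · exact Or.inl (by funext i; fin_cases i <;> simp [e3_apply, h0, h1', h2] <;> ring)
      · exact Or.inr (Or.inl
          (by funext i; fin_cases i <;> simp [e3_apply, h0, h1', h2] <;> ring))
  -- Convex hull of the corners is the box.
  have hullK : convexHull ℝ K = B := by
    rw [hK, convexHull_pi, hB]
    have : (fun i => (convexHull ℝ) ({av i, bv i} : Set ℝ)) =
        fun i => Set.Icc (av i) (bv i) := by
      funext i
      rw [convexHull_pair, segment_eq_Icc (hab i).le]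
    rw [this]
  -- Extreme points of the box are the corners.
  have epB : Set.extremePoints ℝ B = K := by
    rw [hB, extremePoints_pi, hK]
    have : (fun i => Set.extremePoints ℝ (Set.Icc (av i) (bv i))) =
        fun i => ({av i, bv i} : Set ℝ) := by
      funext i
      exact extremePoints_Icc_real (hab i)
    rw [this]
  constructor
  · rw [hVK, hCB, ← hullK]
    exact e3.toLinearMap.image_convexHull K
  · rw [hCB, hVK, ← image_extremePoints e3 B, epB]
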